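/- If λ satisfies the characteristic quadratic (u²−c²)λ² − 2ρc²vλ − ρ²c²(u²+v²) = 0, then the row vector ℓ = (λ/ρ + v, −u, −λu) is a left eigenvector: ℓ·(A₂ − λA₁) = 0, where A₁ = [[ρu,0,1],[0,ρu,0],[1,0,u/(ρc²)]] and A₂ = [[0,0,−ρv],[0,0,ρu],[−ρv,ρu,0]]. -/

import Mathlib

open Matrix

/-- If `l` satisfies the characteristic quadratic, then `ℓ = (l/ρ + v, −u, −l u)` is a left
eigenvector: `ℓ·(A₂ − l A₁) = 0`. -/
theorem left_eigenvector (u v ρ c l : ℝ) (hρ : ρ ≠ 0) (hc : c ≠ 0)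
    (hquad : (u ^ 2 - c ^ 2) * l ^ 2 - 2 * ρ * c ^ 2 * v * l
        - ρ ^ 2 * c ^ 2 * (u ^ 2 + v ^ 2) = 0) :
    Matrix.vecMul ![l / ρ + v, -u, -l * u]
      ((!![0, 0, -ρ * v; 0, 0, ρ * u; -ρ * v, ρ * u, 0] : Matrix (Fin 3) (Fin 3) ℝ)
        - l • (!![ρ * u, 0, 1; 0, ρ * u, 0; 1, 0, u / (ρ * c ^ 2)] : Matrix (Fin 3) (Fin 3) ℝ))
      = 0 := by
  funext i
  fin_cases i
  · simp [vecMul, dotProduct, Fin.sum_univ_three]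
    field_simp
    ring
  · simp [vecMul, dotProduct, Fin.sum_univ_three]
    ring
  · simp [vecMul, dotProduct, Fin.sum_univ_three]
    field_simp
    linear_combination hquad
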